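/- Let μ be an invariant probability measure of a flow ψ^t on a compact metric space M such that μ(γ) = 1 for some single periodic orbit γ. If ν is another ergodic invariant measure with (μ × ν)({(p,q) : the orbits of p and q are disjoint}) = 0, and ν-almost every point is recurrent, then ν is also supported on γ. -/

import Mathlib

open MeasureTheory Filter Topology

/-- Let `ψ^t` be a flow on a compact metric space `M`, `γ` a periodic
orbit, and `μ` an invariant probability measure with `μ(γ) = 1`.  If `ν` is another ergodic
invariant probability measure such that the set `R = {(p,q) : ψ^ℝ(p) ∩ ψ^ℝ(q) = ∅}` of pairs
with disjoint orbits has `(μ × ν)(R) = 0`, and `ν`-almost every point is recurrent, then `ν`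
is also supported on `γ` (i.e. `ν(γ) = 1`). -/
theorem stmt_16 {M : Type*} [MetricSpace M] [CompactSpace M]
    [MeasurableSpace M] [BorelSpace M]
    (ψ : ℝ → M → M) (hcont : Continuous fun q : ℝ × M => ψ q.1 q.2)
    (hψ0 : ψ 0 = id) (hψadd : ∀ s t : ℝ, ψ (s + t) = ψ s ∘ ψ t)
    (p₀ : M) (S : ℝ) (hS : 0 < S) (hper : ψ S p₀ = p₀)
    (γ : Set M) (hγ : γ = Set.range fun t : ℝ => ψ t p₀) (hγmeas : MeasurableSet γ)
    (μ ν : Measure M) [IsProbabilityMeasure μ] [IsProbabilityMeasure ν]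
    (hμinv : ∀ t : ℝ, μ.map (ψ t) = μ) (hνinv : ∀ t : ℝ, ν.map (ψ t) = ν)
    (hνerg : ∀ A : Set M, MeasurableSet A → (∀ t : ℝ, ψ t ⁻¹' A = A) → ν A = 0 ∨ ν A = 1)
    (hμγ : μ γ = 1)
    (R : Set (M × M))
    (hR : R = {x : M × M | (Set.range fun t : ℝ => ψ t x.1) ∩ (Set.range fun t : ℝ => ψ t x.2) = ∅})
    (hRmeas : MeasurableSet R)
    (hRnull : (μ.prod ν) R = 0)
    (hrec : ∀ᵐ q ∂ν, ∃ u : ℕ → ℝ, Tendsto u atTop atTop ∧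
      Tendsto (fun n => ψ (u n) q) atTop (𝓝 q)) :
    ν γ = 1 := by
  have hcomp : ∀ (s t : ℝ) (x : M), ψ (s + t) x = ψ s (ψ t x) := by
    intro s t x; rw [hψadd]; rfl
  -- Key fact: any point whose orbit meets γ's generating orbit lies in γ.
  have horb : ∀ q : M, ((Set.range fun t : ℝ => ψ t p₀) ∩ (Set.range fun t : ℝ => ψ t q)).Nonempty → q ∈ γ := by
    rintro q ⟨x, ⟨u, hu⟩, ⟨t, ht⟩⟩
    have hu' : ψ u p₀ = x := hu
    have ht' : ψ t q = x := ht
    have hq : ψ (-t) x = q := by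
      rw [← ht', ← hcomp]; simp [hψ0]
    rw [hγ]
    refine ⟨-t + u, ?_⟩
    show ψ (-t + u) p₀ = q
    rw [hcomp, hu', hq]
  -- the orbit of any point of γ equals the orbit of p₀
  have horbγ : ∀ p ∈ γ, (Set.range fun t : ℝ => ψ t p) = Set.range fun t : ℝ => ψ t p₀ := by
    rintro p hp
    rw [hγ] at hp
    obtain ⟨s, hs⟩ := hp
    have hs' : ψ s p₀ = p := hs
    ext x
    constructor
    · rintro ⟨t, ht⟩
      have ht' : ψ t p = x := ht
      exact ⟨t + s, by show ψ (t + s) p₀ = x; rw [hcomp, hs', ht']⟩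
    · rintro ⟨t, ht⟩
      have ht' : ψ t p₀ = x := ht
      refine ⟨t - s, ?_⟩
      show ψ (t - s) p = x
      rw [← hs', ← hcomp, sub_add_cancel, ht']
  -- Fubini in the other order
  have hswap : (ν.prod μ) (Prod.swap ⁻¹' R) = 0 := by
    rw [← Measure.prod_swap, Measure.map_apply measurable_swap (measurable_swap hRmeas)]
    simpa [Set.preimage_preimage] using hRnull
  have hsec : ∀ᵐ q ∂ν, μ {p | (p, q) ∈ R} = 0 := by
    have := (Measure.measure_prod_null (μ := ν) (ν := μ)
      (measurable_swap hRmeas)).mp hswap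
    filter_upwards [this] with q hq
    simpa [Prod.swap, Set.preimage] using hq
  have hae : ∀ᵐ q ∂ν, q ∈ γ := by
    filter_upwards [hsec] with q hq
    have h1 : μ (γ \ {p | (p, q) ∈ R}) ≠ 0 := by
      intro h0
      have : μ γ ≤ μ (γ \ {p | (p, q) ∈ R}) + μ {p | (p, q) ∈ R} := by
        refine le_trans (measure_mono ?_) (measure_union_le _ _)
        intro x hx
        by_cases hxR : (x, q) ∈ R
        · exact Or.inr hxR
        · exact Or.inl ⟨hx, hxR⟩
      rw [h0, hq, add_zero, hμγ] at this
      exact absurd this (by norm_num)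
    obtain ⟨p, hpγ, hpR⟩ := nonempty_of_measure_ne_zero h1
    have hne : ((Set.range fun t : ℝ => ψ t p) ∩ (Set.range fun t : ℝ => ψ t q)).Nonempty := by
      rw [Set.nonempty_iff_ne_empty]
      intro hemp
      exact hpR (by rw [hR]; exact hemp)
    rw [horbγ p hpγ] at hne
    exact horb q hne
  have hc : ν γᶜ = 0 := by
    rw [ae_iff] at hae
    simpa [Set.compl_def] using hae
  exact (prob_compl_eq_zero_iff (μ := ν) hγmeas).mp hc
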